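/- Let n ≥ 5 and suppose H(x) = r^{4-n} + B + α(x) and Γ(x) = r^{2-n} + C + β(x) near 0 in ℝ^n, where α, β are smooth with α(0) = β(0) = 0. Then Γ^{2/(n-2)} · H = r^{2-n} + B r^{-2} + O(r^{-1}) as r → 0, i.e., there exist constants K, δ > 0 with |Γ(x)^{2/(n-2)} H(x) - ‖x‖^{2-n} - B‖x‖^{-2}| ≤ K ‖x‖^{-1} for 0 < ‖x‖ < δ. -/

import Mathlib

/-- A `C¹` function vanishing at `0` is bounded by `L‖x‖` near `0`. -/
lemma lin_bound_of_contDiff {E : Type*} [NormedAddCommGroup E] [NormedSpace ℝ E]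
    (γ : E → ℝ) (hγ : ContDiff ℝ 1 γ) (hγ0 : γ 0 = 0) :
    ∃ L ε : ℝ, 0 < L ∧ 0 < ε ∧ ∀ x : E, ‖x‖ < ε → |γ x| ≤ L * ‖x‖ := by
  obtain ⟨L, t, ht, hlip⟩ := (hγ.contDiffAt (x := 0)).exists_lipschitzOnWith
  obtain ⟨ε, hε, hball⟩ := Metric.mem_nhds_iff.1 ht
  refine ⟨(L : ℝ) + 1, ε, by positivity, hε, fun x hx => ?_⟩
  have hx0 : x ∈ t := hball (by simpa [Metric.mem_ball, dist_zero_right] using hx)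
  have h0 : (0 : E) ∈ t := hball (Metric.mem_ball_self hε)
  have h := hlip.dist_le_mul x hx0 0 h0
  rw [hγ0, dist_zero_right, dist_zero_right, Real.norm_eq_abs] at h
  have : (L : ℝ) * ‖x‖ ≤ ((L : ℝ) + 1) * ‖x‖ := by
    have := norm_nonneg x; nlinarith
  linarith

/-- Near `t = 0`, `(1+t)^p - 1 = O(t)`. -/
lemma rpow_one_add_bound (p : ℝ) :
    ∃ M ε : ℝ, 0 < M ∧ 0 < ε ∧ ∀ t : ℝ, |t| < ε → |(1 + t) ^ p - 1| ≤ M * |t| := by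
  have hd : HasDerivAt (fun t : ℝ => (1 + t) ^ p) (1 * p * (1 + (0:ℝ)) ^ (p - 1)) 0 :=
    HasDerivAt.rpow_const ((hasDerivAt_id (0:ℝ)).const_add 1) (Or.inl (by norm_num))
  have hO := hd.differentiableAt.isBigO_sub
  rw [Asymptotics.isBigO_iff] at hO
  obtain ⟨c, hc⟩ := hO
  rw [Metric.eventually_nhds_iff] at hc
  obtain ⟨ε, hε, hc⟩ := hc
  refine ⟨max c 1, ε, lt_max_of_lt_right one_pos, hε, fun t ht => ?_⟩
  have h := hc (y := t) (by simpa [Real.dist_eq] using ht)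
  simp only [add_zero, Real.one_rpow, sub_zero, Real.norm_eq_abs] at h
  calc |(1 + t) ^ p - 1| ≤ c * |t| := h
    _ ≤ max c 1 * |t| := by
        have : c ≤ max c 1 := le_max_left c 1
        nlinarith [abs_nonneg t]

set_option maxHeartbeats 1000000 in
theorem green_product_expansion (n : ℕ) (hn : 5 ≤ n) (B C : ℝ)
    (α β : EuclideanSpace ℝ (Fin n) → ℝ)
    (hα : ContDiff ℝ 1 α) (hβ : ContDiff ℝ 1 β)
    (hα0 : α 0 = 0) (hβ0 : β 0 = 0) :
    ∃ K δ : ℝ, 0 < K ∧ 0 < δ ∧ ∀ x : EuclideanSpace ℝ (Fin n),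
      0 < ‖x‖ → ‖x‖ < δ →
      |(‖x‖ ^ ((2 : ℤ) - n) + C + β x) ^ ((2 : ℝ) / ((n : ℝ) - 2)) *
          (‖x‖ ^ ((4 : ℤ) - n) + B + α x)
        - ‖x‖ ^ ((2 : ℤ) - n) - B * ‖x‖ ^ (-2 : ℤ)| ≤ K * ‖x‖⁻¹ := by
  set p : ℝ := (2 : ℝ) / ((n : ℝ) - 2) with hpdef
  have hn5 : (5 : ℝ) ≤ (n : ℝ) := by exact_mod_cast hn
  have hn2 : (n : ℝ) - 2 ≠ 0 := by linarith
  obtain ⟨Lα, εα, hLα, hεα, hlinα⟩ := lin_bound_of_contDiff α hα hα0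
  obtain ⟨Lβ, εβ, hLβ, hεβ, hlinβ⟩ := lin_bound_of_contDiff β hβ hβ0
  obtain ⟨M, ε3, hM, hε3, hφ⟩ := rpow_one_add_bound p
  set Cb : ℝ := |C| + Lβ with hCbdef
  have hCb : 0 < Cb := by positivity
  set δ : ℝ := min εα (min εβ (min 1 (min (ε3 / (Cb + 1)) (1 / (2 * (Cb + 1)))))) with hδdef
  have hδpos : 0 < δ := by
    refine lt_min hεα (lt_min hεβ (lt_min one_pos (lt_min ?_ ?_))) <;> positivity
  refine ⟨M * Cb * (1 + |B| + Lα) + Lα + 1, δ, by positivity, hδpos, fun x hr hrδ => ?_⟩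
  set r : ℝ := ‖x‖ with hrdef
  have hrne : r ≠ 0 := ne_of_gt hr
  have hr1 : r ≤ 1 := le_of_lt (lt_of_lt_of_le hrδ (by
    rw [hδdef]; exact (min_le_right _ _).trans ((min_le_right _ _).trans (min_le_left _ _))))
  have hrεα : r < εα := lt_of_lt_of_le hrδ (by rw [hδdef]; exact min_le_left _ _)
  have hrεβ : r < εβ := lt_of_lt_of_le hrδ (by
    rw [hδdef]; exact (min_le_right _ _).trans (min_le_left _ _))
  have hrε3 : (Cb + 1) * r < ε3 := by
    have h1 : r < ε3 / (Cb + 1) := lt_of_lt_of_le hrδ (by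
      rw [hδdef]
      exact (min_le_right _ _).trans ((min_le_right _ _).trans
        ((min_le_right _ _).trans (min_le_left _ _))))
    have : 0 < Cb + 1 := by positivity
    calc (Cb + 1) * r < (Cb + 1) * (ε3 / (Cb + 1)) := by
          exact mul_lt_mul_of_pos_left h1 this
      _ = ε3 := by field_simp
  have hrhalf : (Cb + 1) * r < 1 / 2 := by
    have h1 : r < 1 / (2 * (Cb + 1)) := lt_of_lt_of_le hrδ (by
      rw [hδdef]
      exact (min_le_right _ _).trans ((min_le_right _ _).trans
        ((min_le_right _ _).trans (min_le_right _ _))))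
    have h2 : 0 < Cb + 1 := by positivity
    calc (Cb + 1) * r < (Cb + 1) * (1 / (2 * (Cb + 1))) := mul_lt_mul_of_pos_left h1 h2
      _ = 1 / 2 := by field_simp
  -- abbreviations for the powers of r
  set a : ℝ := r ^ ((2 : ℤ) - n) with hadef
  set b : ℝ := r ^ ((4 : ℤ) - n) with hbdef
  set c : ℝ := r ^ (-2 : ℤ) with hcdef
  set d : ℝ := r ^ ((n : ℤ) - 2) with hddef
  set e : ℝ := r ^ ((n : ℤ) - 4) with hedef
  have hapos : 0 < a := zpow_pos hr _
  have hbpos : 0 < b := zpow_pos hr _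
  have hcpos : 0 < c := zpow_pos hr _
  have hdpos : 0 < d := zpow_pos hr _
  have hepos : 0 < e := zpow_pos hr _
  have had : a * d = 1 := by
    rw [hadef, hddef, ← zpow_add₀ hrne]
    norm_num
  have hcb : c * b = a := by
    rw [hadef, hbdef, hcdef, ← zpow_add₀ hrne]
    congr 1; ring
  have hcd : c * d = e := by
    rw [hcdef, hddef, hedef, ← zpow_add₀ hrne]
    congr 1; ring
  have heb : e * b = 1 := by
    rw [hedef, hbdef, ← zpow_add₀ hrne]
    norm_num
  have hrc : r * c = r⁻¹ := by
    rw [hcdef]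
    rw [show r * r ^ (-2 : ℤ) = r ^ (1 : ℤ) * r ^ (-2 : ℤ) by norm_num,
      ← zpow_add₀ hrne]
    norm_num
  have he1 : e ≤ 1 := by
    rw [hedef, show ((n : ℤ) - 4) = ((n - 4 : ℕ) : ℤ) by omega, zpow_natCast]
    exact pow_le_one₀ hr.le hr1
  have hdr : d ≤ r := by
    rw [hddef, show ((n : ℤ) - 2) = ((n - 2 : ℕ) : ℤ) by omega, zpow_natCast]
    calc r ^ (n - 2) ≤ r ^ 1 := pow_le_pow_of_le_one hr.le hr1 (by omega)
      _ = r := pow_one r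
  have hrinv1 : 1 ≤ r⁻¹ := by
    rw [le_inv_comm₀ one_pos hr]; simpa using hr1
  -- bounds on α, β
  have hαb : |α x| ≤ Lα * r := hlinα x hrεα
  have hβb : |β x| ≤ Lβ * r := hlinβ x hrεβ
  have hCβ : |C + β x| ≤ Cb := by
    calc |C + β x| ≤ |C| + |β x| := abs_add_le _ _
      _ ≤ |C| + Lβ * r := by linarith
      _ ≤ Cb := by
          rw [hCbdef]
          have h := mul_le_mul_of_nonneg_left hr1 hLβ.le
          rw [mul_one] at h
          linarith
  -- the small quantity u
  set u : ℝ := (C + β x) * d with hudef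
  have huabs : |u| ≤ Cb * d := by
    rw [hudef, abs_mul, abs_of_pos hdpos]
    exact mul_le_mul_of_nonneg_right hCβ hdpos.le
  have huCbr : |u| ≤ Cb * r := huabs.trans (mul_le_mul_of_nonneg_left hdr hCb.le)
  have hCbr : Cb * r < (Cb + 1) * r := mul_lt_mul_of_pos_right (lt_add_one Cb) hr
  have huε3 : |u| < ε3 := by
    calc |u| ≤ Cb * r := huCbr
      _ < (Cb + 1) * r := hCbr
      _ < ε3 := hrε3
  have huhalf : |u| < 1 / 2 := by
    calc |u| ≤ Cb * r := huCbr
      _ < (Cb + 1) * r := hCbr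
      _ < 1 / 2 := hrhalf
  have hu1 : (0 : ℝ) ≤ 1 + u := by
    have := abs_le.1 huhalf.le
    linarith [this.1]
  -- factor Γ
  have hΓ : a + C + β x = a * (1 + u) := by
    linear_combination -(C + β x) * had
  -- compute the rpow
  have hap : a ^ p = c := by
    rw [hadef, hcdef, ← Real.rpow_intCast r ((2 : ℤ) - n), ← Real.rpow_intCast r (-2 : ℤ),
      ← Real.rpow_mul hr.le]
    congr 1
    rw [hpdef]
    push_cast
    field_simp
    ring
  have hΓp : (a + C + β x) ^ p = c * (1 + u) ^ p := by
    rw [hΓ, Real.mul_rpow hapos.le hu1, hap]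
  -- the deviation w
  set w : ℝ := (1 + u) ^ p - 1 with hwdef
  have hwb : |w| ≤ M * |u| := hφ u huε3
  have hup : (1 + u) ^ p = 1 + w := by rw [hwdef]; ring
  -- key algebraic identity
  have hkey : (a + C + β x) ^ p * (b + B + α x) - a - B * c
      = c * w * (b + B + α x) + α x * c := by
    rw [hΓp, hup]
    linear_combination hcb
  rw [hkey]
  -- now the estimate
  have hHb : |b + B + α x| ≤ b + |B| + Lα := by
    calc |b + B + α x| ≤ |b + B| + |α x| := abs_add_le _ _
      _ ≤ |b| + |B| + |α x| := by linarith [abs_add_le b B]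
      _ ≤ b + |B| + Lα := by
          rw [abs_of_pos hbpos]
          have h := mul_le_mul_of_nonneg_left hr1 hLα.le
          rw [mul_one] at h
          linarith
  have hterm1 : |c * w * (b + B + α x)| ≤ M * Cb * (1 + |B| + Lα) := by
    rw [abs_mul, abs_mul, abs_of_pos hcpos]
    have h1 : |w| ≤ M * (Cb * d) := hwb.trans (by
      exact mul_le_mul_of_nonneg_left huabs hM.le)
    have h2 : c * |w| ≤ c * (M * (Cb * d)) := mul_le_mul_of_nonneg_left h1 hcpos.le
    have h3 : c * (M * (Cb * d)) = M * Cb * e := by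
      rw [← hcd]; ring
    have h4 : c * |w| * |b + B + α x| ≤ M * Cb * e * (b + |B| + Lα) := by
      apply mul_le_mul (h3 ▸ h2) hHb (abs_nonneg _)
      positivity
    have h5 : M * Cb * e * (b + |B| + Lα) = M * Cb * (e * b + (|B| + Lα) * e) := by ring
    have h6 : e * b + (|B| + Lα) * e ≤ 1 + (|B| + Lα) := by
      rw [heb]
      have : (|B| + Lα) * e ≤ (|B| + Lα) * 1 := by
        apply mul_le_mul_of_nonneg_left he1; positivity
      linarith
    calc c * |w| * |b + B + α x| ≤ M * Cb * (e * b + (|B| + Lα) * e) := by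
          rw [← h5]; exact h4
      _ ≤ M * Cb * (1 + (|B| + Lα)) := by
          apply mul_le_mul_of_nonneg_left h6; positivity
      _ = M * Cb * (1 + |B| + Lα) := by ring
  have hterm2 : |α x * c| ≤ Lα * r⁻¹ := by
    rw [abs_mul, abs_of_pos hcpos]
    calc |α x| * c ≤ Lα * r * c := mul_le_mul_of_nonneg_right hαb hcpos.le
      _ = Lα * (r * c) := by ring
      _ = Lα * r⁻¹ := by rw [hrc]
  calc |c * w * (b + B + α x) + α x * c|
      ≤ |c * w * (b + B + α x)| + |α x * c| := abs_add_le _ _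
    _ ≤ M * Cb * (1 + |B| + Lα) + Lα * r⁻¹ := add_le_add hterm1 hterm2
    _ ≤ (M * Cb * (1 + |B| + Lα) + Lα + 1) * r⁻¹ := by
        have hT : (0:ℝ) ≤ M * Cb * (1 + |B| + Lα) := by positivity
        have h1 := mul_le_mul_of_nonneg_left hrinv1 hT
        rw [mul_one] at h1
        linarith [h1, hrinv1]
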